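/- If w = [[a, b],[b, a]] is a 2n×2n sudoku unitary (magic unitary of this block form), then the n×n matrix u = a − b has self-adjoint entries, is orthogonal (u u^t = u^t u = 1), and is cubic: u_{ij}u_{ik} = 0 and u_{ji}u_{ki} = 0 for j ≠ k. -/
import Mathlib

lemma orth_of_sum_one {A : Type*} [NormedRing A] [StarRing A] [CStarRing A]
    [NormedAlgebra ℂ A] [StarModule ℂ A] [CompleteSpace A]
    {ι : Type*} [Fintype ι] [DecidableEq ι] (p : ι → A)
    (h : ∀ i, IsSelfAdjoint (p i) ∧ IsIdempotentElem (p i))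
    (hsum : ∑ k, p k = 1) {i j : ι} (hij : i ≠ j) : p i * p j = 0 := by
  letI : CStarAlgebra A := ⟨⟩
  letI := CStarAlgebra.spectralOrder A
  haveI := CStarAlgebra.spectralOrderedRing A
  have key : ∑ k ∈ Finset.univ.erase i, p i * (p k * p i) = 0 := by
    have h1 : ∑ k, p i * (p k * p i) = p i := by
      calc ∑ k, p i * (p k * p i) = p i * (∑ k, p k) * p i := by
            rw [Finset.mul_sum, Finset.sum_mul]
            exact Finset.sum_congr rfl fun k _ => (mul_assoc _ _ _).symm
        _ = p i := by rw [hsum, mul_one, (h i).2]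
    rw [← Finset.add_sum_erase _ _ (Finset.mem_univ i)] at h1
    have hii : p i * (p i * p i) = p i := by rw [(h i).2, (h i).2]
    rw [hii] at h1
    exact add_left_cancel (h1.trans (add_zero (p i)).symm)
  have hterm : ∀ k ∈ Finset.univ.erase i, p i * (p k * p i) = star (p k * p i) * (p k * p i) := by
    intro k _
    have hk2 : p k * (p k * p i) = p k * p i := by rw [← mul_assoc, (h k).2]
    rw [star_mul, (h k).1.star_eq, (h i).1.star_eq, mul_assoc, hk2]
  have hzero : ∀ k ∈ Finset.univ.erase i, p i * (p k * p i) = 0 := by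
    rw [Finset.sum_eq_zero_iff_of_nonneg ?_] at key
    · exact key
    · intro k hk
      rw [hterm k hk]
      exact star_mul_self_nonneg _
  have hj : p j * p i = 0 := by
    have hmem := Finset.mem_erase.mpr ⟨hij.symm, Finset.mem_univ j⟩
    have := hzero j hmem
    rw [hterm j hmem] at this
    exact CStarRing.star_mul_self_eq_zero_iff _ |>.mp this
  calc p i * p j = star (p j * p i) := by
        rw [star_mul, (h i).1.star_eq, (h j).1.star_eq]
    _ = 0 := by rw [hj, star_zero]

theorem sudoku_to_cubic {A : Type*} [NormedRing A] [StarRing A] [CStarRing A]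
    [NormedAlgebra ℂ A] [StarModule ℂ A] [CompleteSpace A] {n : ℕ}
    (a b : Matrix (Fin n) (Fin n) A)
    (hproj : ∀ i j, IsSelfAdjoint (Matrix.fromBlocks a b b a i j) ∧
      IsIdempotentElem (Matrix.fromBlocks a b b a i j))
    (hrow : ∀ i, ∑ j, Matrix.fromBlocks a b b a i j = 1)
    (hcol : ∀ j, ∑ i, Matrix.fromBlocks a b b a i j = 1) :
    (∀ i j, IsSelfAdjoint ((a - b) i j)) ∧
      (a - b) * (a - b).transpose = 1 ∧ (a - b).transpose * (a - b) = 1 ∧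
      (∀ i j k, j ≠ k → (a - b) i j * (a - b) i k = 0) ∧
      (∀ i j k, j ≠ k → (a - b) j i * (a - b) k i = 0) := by
  set w := Matrix.fromBlocks a b b a with hw
  -- orthogonality within rows and columns
  have hR : ∀ r x y, x ≠ y → w r x * w r y = 0 := fun r x y hxy =>
    orth_of_sum_one (fun c => w r c) (fun c => hproj r c) (hrow r) hxy
  have hC : ∀ c x y, x ≠ y → w x c * w y c = 0 := fun c x y hxy =>
    orth_of_sum_one (fun r => w r c) (fun r => hproj r c) (hcol c) hxy
  -- entries of w in terms of a, b
  have haa : ∀ i j, a i j = w (Sum.inl i) (Sum.inl j) := fun i j => rfl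
  have hbb : ∀ i j, b i j = w (Sum.inl i) (Sum.inr j) := fun i j => rfl
  have hbb' : ∀ i j, b i j = w (Sum.inr i) (Sum.inl j) := fun i j => rfl
  refine ⟨?_, ?_, ?_, ?_, ?_⟩
  · intro i j
    exact ((hproj (Sum.inl i) (Sum.inl j)).1).sub ((hproj (Sum.inl i) (Sum.inr j)).1)
  · -- u * uᵀ = 1
    ext i k
    rw [Matrix.mul_apply, Matrix.one_apply]
    by_cases hik : i = k
    · subst hik
      simp only [if_pos rfl]
      have hterm : ∀ j, (a - b) i j * (a - b).transpose j i = a i j + b i j := by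
        intro j
        have h1 : a i j * b i j = 0 := hC (Sum.inl j) (Sum.inl i) (Sum.inr i) (by simp)
        have h2 : b i j * a i j = 0 := hC (Sum.inl j) (Sum.inr i) (Sum.inl i) (by simp)
        have h3 : a i j * a i j = a i j := (hproj (Sum.inl i) (Sum.inl j)).2
        have h4 : b i j * b i j = b i j := (hproj (Sum.inl i) (Sum.inr j)).2
        simp only [Matrix.transpose_apply, Matrix.sub_apply, sub_mul, mul_sub, h1, h2, h3, h4]
        abel
      rw [Finset.sum_congr rfl fun j _ => hterm j, Finset.sum_add_distrib]
      have := hrow (Sum.inl i)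
      rwa [Fintype.sum_sum_type] at this
    · simp only [if_neg hik]
      refine Finset.sum_eq_zero fun j _ => ?_
      have h1 : a i j * a k j = 0 := hC (Sum.inl j) (Sum.inl i) (Sum.inl k) (by simp [hik])
      have h2 : a i j * b k j = 0 := hC (Sum.inl j) (Sum.inl i) (Sum.inr k) (by simp)
      have h3 : b i j * a k j = 0 := hC (Sum.inl j) (Sum.inr i) (Sum.inl k) (by simp)
      have h4 : b i j * b k j = 0 := hC (Sum.inl j) (Sum.inr i) (Sum.inr k) (by simp [hik])
      simp only [Matrix.transpose_apply, Matrix.sub_apply, sub_mul, mul_sub, h1, h2, h3, h4]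
      abel
  · -- uᵀ * u = 1
    ext j k
    rw [Matrix.mul_apply, Matrix.one_apply]
    by_cases hjk : j = k
    · subst hjk
      simp only [if_pos rfl]
      have hterm : ∀ i, (a - b).transpose j i * (a - b) i j = a i j + b i j := by
        intro i
        have h1 : a i j * b i j = 0 := hR (Sum.inl i) (Sum.inl j) (Sum.inr j) (by simp)
        have h2 : b i j * a i j = 0 := hR (Sum.inl i) (Sum.inr j) (Sum.inl j) (by simp)
        have h3 : a i j * a i j = a i j := (hproj (Sum.inl i) (Sum.inl j)).2
        have h4 : b i j * b i j = b i j := (hproj (Sum.inl i) (Sum.inr j)).2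
        simp only [Matrix.transpose_apply, Matrix.sub_apply, sub_mul, mul_sub, h1, h2, h3, h4]
        abel
      rw [Finset.sum_congr rfl fun i _ => hterm i, Finset.sum_add_distrib]
      have := hcol (Sum.inl j)
      rwa [Fintype.sum_sum_type] at this
    · simp only [if_neg hjk]
      refine Finset.sum_eq_zero fun i _ => ?_
      have h1 : a i j * a i k = 0 := hR (Sum.inl i) (Sum.inl j) (Sum.inl k) (by simp [hjk])
      have h2 : a i j * b i k = 0 := hR (Sum.inl i) (Sum.inl j) (Sum.inr k) (by simp)
      have h3 : b i j * a i k = 0 := hR (Sum.inl i) (Sum.inr j) (Sum.inl k) (by simp)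
      have h4 : b i j * b i k = 0 := hR (Sum.inl i) (Sum.inr j) (Sum.inr k) (by simp [hjk])
      simp only [Matrix.transpose_apply, Matrix.sub_apply, sub_mul, mul_sub, h1, h2, h3, h4]
      abel
  · intro i j k hjk
    have h1 : a i j * a i k = 0 := hR (Sum.inl i) (Sum.inl j) (Sum.inl k) (by simp [hjk])
    have h2 : a i j * b i k = 0 := hR (Sum.inl i) (Sum.inl j) (Sum.inr k) (by simp)
    have h3 : b i j * a i k = 0 := hR (Sum.inl i) (Sum.inr j) (Sum.inl k) (by simp)
    have h4 : b i j * b i k = 0 := hR (Sum.inl i) (Sum.inr j) (Sum.inr k) (by simp [hjk])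
    simp only [Matrix.sub_apply, sub_mul, mul_sub, h1, h2, h3, h4]
    abel
  · intro i j k hjk
    have h1 : a j i * a k i = 0 := hC (Sum.inl i) (Sum.inl j) (Sum.inl k) (by simp [hjk])
    have h2 : a j i * b k i = 0 := hC (Sum.inl i) (Sum.inl j) (Sum.inr k) (by simp)
    have h3 : b j i * a k i = 0 := hC (Sum.inl i) (Sum.inr j) (Sum.inl k) (by simp)
    have h4 : b j i * b k i = 0 := hC (Sum.inl i) (Sum.inr j) (Sum.inr k) (by simp [hjk])
    simp only [Matrix.sub_apply, sub_mul, mul_sub, h1, h2, h3, h4]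
    abel
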